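/- Unit vectors x_1, ..., x_n in R^d (n ≥ 2) achieve equality in Rankin's simplex bound, i.e., min_{i≠j} ||x_i - x_j|| = sqrt(2n/(n-1)), if and only if all pairwise distances are equal to sqrt(2n/(n-1)) and sum_i x_i = 0. -/

import Mathlib

theorem rankin_simplex_equality (d n : ℕ) (hn : 2 ≤ n)
    (x : Fin n → EuclideanSpace ℝ (Fin d)) (hx : ∀ i, ‖x i‖ = 1) :
    IsLeast {s : ℝ | ∃ i j : Fin n, i ≠ j ∧ s = ‖x i - x j‖}
        (Real.sqrt (2 * n / ((n : ℝ) - 1))) ↔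
      ((∀ i j : Fin n, i ≠ j → ‖x i - x j‖ = Real.sqrt (2 * n / ((n : ℝ) - 1))) ∧
        ∑ i, x i = 0) := by
  have hn2 : (2:ℝ) ≤ (n:ℝ) := by exact_mod_cast hn
  set c : ℝ := Real.sqrt (2 * n / ((n : ℝ) - 1)) with hc
  have hn1 : (0:ℝ) < (n:ℝ) - 1 := by linarith
  have hcnn : 0 ≤ c := Real.sqrt_nonneg _
  have hc2 : c ^ 2 = 2 * n / ((n:ℝ) - 1) := by
    rw [hc, Real.sq_sqrt]
    apply div_nonneg (by linarith) (by linarith)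
  -- key identity
  have h1 : ∀ i j : Fin n, ‖x i - x j‖ ^ 2 = 2 - 2 * (inner ℝ (x i) (x j) : ℝ) := by
    intro i j
    rw [← real_inner_self_eq_norm_sq, inner_sub_sub_self, real_inner_self_eq_norm_sq,
      real_inner_self_eq_norm_sq, hx i, hx j, real_inner_comm]
    ring
  have h2 : ‖∑ i, x i‖ ^ 2 = ∑ i, ∑ j, (inner ℝ (x i) (x j) : ℝ) := by
    rw [← real_inner_self_eq_norm_sq, sum_inner]
    simp [inner_sum]
  have key : ∑ i, ∑ j, ‖x i - x j‖ ^ 2 = 2 * (n:ℝ)^2 - 2 * ‖∑ i, x i‖ ^ 2 := by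
    simp only [h1, Finset.sum_sub_distrib, Finset.sum_const, Finset.card_univ,
      Fintype.card_fin, nsmul_eq_mul, ← Finset.mul_sum, h2]
    ring
  have hfull : ∑ i, ∑ j, ‖x i - x j‖ ^ 2
      = ∑ p ∈ (Finset.univ : Finset (Fin n)).offDiag, ‖x p.1 - x p.2‖ ^ 2 := by
    rw [← Finset.sum_product', ← Finset.diag_union_offDiag,
      Finset.sum_union (Finset.disjoint_diag_offDiag _), Finset.sum_diag]
    simp
  have hcard : (((Finset.univ : Finset (Fin n)).offDiag.card : ℝ))
      = (n:ℝ) * ((n:ℝ) - 1) := by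
    rw [Finset.offDiag_card, Finset.card_univ, Fintype.card_fin]
    have : n ≤ n * n := Nat.le_mul_of_pos_left n (by omega)
    push_cast [Nat.cast_sub this]
    ring
  constructor
  · rintro ⟨⟨i0, j0, hij0, hs0⟩, hlb⟩
    have hge : ∀ i j : Fin n, i ≠ j → c ≤ ‖x i - x j‖ := fun i j h => hlb ⟨i, j, h, rfl⟩
    have hge2 : ∀ i j : Fin n, i ≠ j → c ^ 2 ≤ ‖x i - x j‖ ^ 2 := fun i j h =>
      pow_le_pow_left₀ hcnn (hge i j h) 2
    have hsum_ge : (n:ℝ) * ((n:ℝ) - 1) * c ^ 2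
        ≤ ∑ p ∈ (Finset.univ : Finset (Fin n)).offDiag, ‖x p.1 - x p.2‖ ^ 2 := by
      calc (n:ℝ) * ((n:ℝ) - 1) * c ^ 2
          = ∑ _p ∈ (Finset.univ : Finset (Fin n)).offDiag, c ^ 2 := by
            rw [Finset.sum_const, nsmul_eq_mul, hcard]
        _ ≤ _ := Finset.sum_le_sum fun p hp =>
            hge2 p.1 p.2 (Finset.mem_offDiag.mp hp).2.2
    have hval : (n:ℝ) * ((n:ℝ) - 1) * c ^ 2 = 2 * (n:ℝ) ^ 2 := by
      rw [hc2]; field_simp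
    have hS0 : ‖∑ i, x i‖ ^ 2 ≤ 0 := by
      rw [← hfull, key] at hsum_ge
      linarith
    have hS : ∑ i, x i = 0 := by
      have := sq_nonneg ‖∑ i, x i‖
      have h0 : ‖∑ i, x i‖ ^ 2 = 0 := le_antisymm hS0 this
      have := pow_eq_zero_iff (n := 2) (by norm_num) |>.mp h0
      exact norm_eq_zero.mp this
    refine ⟨?_, hS⟩
    have hsum_eq : ∑ p ∈ (Finset.univ : Finset (Fin n)).offDiag,
        (‖x p.1 - x p.2‖ ^ 2 - c ^ 2) = 0 := by
      rw [Finset.sum_sub_distrib, Finset.sum_const, nsmul_eq_mul, hcard, ← hfull, key,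
        hS, norm_zero]
      rw [hval]; ring
    have hzero := (Finset.sum_eq_zero_iff_of_nonneg fun p hp => by
      have := hge2 p.1 p.2 (Finset.mem_offDiag.mp hp).2.2
      linarith).mp hsum_eq
    intro i j hij
    have hij' : (i, j) ∈ (Finset.univ : Finset (Fin n)).offDiag := by
      simp [Finset.mem_offDiag, hij]
    have := hzero (i, j) hij'
    have hsq : ‖x i - x j‖ ^ 2 = c ^ 2 := by linarith
    calc ‖x i - x j‖ = Real.sqrt (‖x i - x j‖ ^ 2) := (Real.sqrt_sq (norm_nonneg _)).symm
      _ = Real.sqrt (c ^ 2) := by rw [hsq]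
      _ = c := Real.sqrt_sq hcnn
  · rintro ⟨heq, -⟩
    constructor
    · refine ⟨⟨0, by omega⟩, ⟨1, by omega⟩, ?_, ?_⟩
      · simp [Fin.ext_iff]
      · exact (heq _ _ (by simp [Fin.ext_iff])).symm
    · rintro s ⟨i, j, hij, rfl⟩
      exact (heq i j hij).ge
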